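/- Let $\theta \ge 0$ be real, let $2 \le l \le n$ be integers, and let $z \in [0,1]$. Then $\sum_{k=0}^{\infty} z^k \cdot \frac{1}{B(l-1,\, n-l+1)} \int_0^1 x^{l-2+\theta}\,(1-x)^{n-l}\,\frac{(-\theta \log x)^k}{k!}\, dx = \prod_{j=l-1}^{n-1} \frac{j}{j + \theta(1-z)}$, where $B$ denotes the Beta function. (The left side exhibits the number of mutations that arise while the sample of $n$ has at least $l$ ancestors as a Poisson mixture with mean $-\theta \log X$, where $X$ has a Beta$(l-1, n-l+1)$ distribution, and the right side is its probability generating function.) -/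

import Mathlib

open Finset Real MeasureTheory

/-- The Beta function `B(a,b) = Γ(a)Γ(b)/Γ(a+b)`. -/
noncomputable def betaFn (a b : ℝ) : ℝ := Real.Gamma a * Real.Gamma b / Real.Gamma (a + b)

lemma gamma_add_nat' (x : ℝ) (hx : 0 < x) (b : ℕ) :
    Real.Gamma (x + b) = (∏ i ∈ Finset.range b, (x + i)) * Real.Gamma x := by
  induction b with
  | zero => simp
  | succ b ih =>
    have h1 : x + (b + 1 : ℕ) = (x + b) + 1 := by push_cast; ring
    rw [h1, Real.Gamma_add_one (by positivity), ih, Finset.prod_range_succ]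
    ring

lemma beta_integral_real' (u v : ℝ) (hu : 0 < u) (hv : 0 < v) :
    ∫ x in (0:ℝ)..1, x ^ (u - 1) * (1 - x) ^ (v - 1) = betaFn u v := by
  have key : Complex.Gamma u * Complex.Gamma v
      = Complex.Gamma (u + v) * Complex.betaIntegral u v :=
    Complex.Gamma_mul_Gamma_eq_betaIntegral (by simpa using hu) (by simpa using hv)
  have hbeta : Complex.betaIntegral u v
      = ((∫ x in (0:ℝ)..1, x ^ (u - 1) * (1 - x) ^ (v - 1) : ℝ) : ℂ) := by
    rw [Complex.betaIntegral, ← intervalIntegral.integral_ofReal]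
    refine intervalIntegral.integral_congr fun x hx => ?_
    have hx' : x ∈ Set.Icc (0:ℝ) 1 := by
      simpa [Set.uIcc_of_le (by norm_num : (0:ℝ) ≤ 1)] using hx
    have h0 : (0:ℝ) ≤ x := hx'.1
    have h1 : (0:ℝ) ≤ 1 - x := by linarith [hx'.2]
    rw [show ((u:ℂ) - 1) = ((u-1:ℝ):ℂ) by push_cast; ring,
      show ((v:ℂ) - 1) = ((v-1:ℝ):ℂ) by push_cast; ring,
      show ((1:ℂ) - (x:ℂ)) = ((1-x:ℝ):ℂ) by push_cast; ring,
      ← Complex.ofReal_cpow h0, ← Complex.ofReal_cpow h1, ← Complex.ofReal_mul]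
  have hG : (0:ℝ) < Real.Gamma (u + v) := Real.Gamma_pos_of_pos (by linarith)
  have key2 : Real.Gamma u * Real.Gamma v
      = Real.Gamma (u + v) * ∫ x in (0:ℝ)..1, x ^ (u - 1) * (1 - x) ^ (v - 1) := by
    have := key
    rw [hbeta, ← Complex.ofReal_add, Complex.Gamma_ofReal, Complex.Gamma_ofReal,
      Complex.Gamma_ofReal, ← Complex.ofReal_mul, ← Complex.ofReal_mul] at this
    exact_mod_cast this
  rw [betaFn, key2]
  field_simp

lemma beta_integral_nat' (u : ℝ) (hu : 0 < u) (m : ℕ) :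
    ∫ x in (0:ℝ)..1, x ^ (u - 1) * (1 - x) ^ m = betaFn u ((m:ℝ) + 1) := by
  rw [← beta_integral_real' u ((m:ℝ) + 1) hu (by positivity)]
  refine intervalIntegral.integral_congr fun x hx => ?_
  rw [add_sub_cancel_right, Real.rpow_natCast]

lemma beta_ratio' (l n : ℕ) (hl : 2 ≤ l) (hln : l ≤ n) (c : ℝ) (hc : 0 ≤ c) :
    betaFn ((l:ℝ) - 1 + c) ((n:ℝ) - l + 1) / betaFn ((l:ℝ) - 1) ((n:ℝ) - l + 1)
      = ∏ j ∈ Finset.Ico (l - 1) n, (j:ℝ) / ((j:ℝ) + c) := by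
  have h2 : (2:ℝ) ≤ (l:ℝ) := by exact_mod_cast hl
  set x : ℝ := (l:ℝ) - 1 with hxdef
  have hx : 0 < x := by rw [hxdef]; linarith
  set b : ℕ := n - l + 1 with hbdef
  have hbcast : ((n:ℝ) - l + 1) = (b:ℝ) := by
    rw [hbdef, Nat.cast_add, Nat.cast_sub hln, Nat.cast_one]
  have hG1 := gamma_add_nat' x hx b
  have hG2 := gamma_add_nat' (x + c) (by linarith) b
  have hGx : 0 < Real.Gamma x := Real.Gamma_pos_of_pos hx
  have hGxc : 0 < Real.Gamma (x + c) := Real.Gamma_pos_of_pos (by linarith)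
  have hGb : 0 < Real.Gamma (b:ℝ) :=
    Real.Gamma_pos_of_pos (by exact_mod_cast Nat.pos_of_ne_zero (by omega))
  have hP0 : 0 < ∏ i ∈ Finset.range b, (x + (i:ℝ)) :=
    Finset.prod_pos fun i _ => by positivity
  have hPc : 0 < ∏ i ∈ Finset.range b, (x + c + (i:ℝ)) :=
    Finset.prod_pos fun i _ => by positivity
  have hrange : n - (l - 1) = b := by omega
  rw [betaFn, betaFn, hbcast, hG1, hG2, Finset.prod_Ico_eq_prod_range, hrange]
  have key : ∀ i ∈ Finset.range b,
      ((l - 1 + i : ℕ):ℝ) / (((l - 1 + i : ℕ):ℝ) + c) = (x + i) / (x + c + i) := by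
    intro i _
    have : ((l - 1 + i : ℕ):ℝ) = x + i := by
      rw [hxdef, Nat.cast_add, Nat.cast_sub (by omega : 1 ≤ l), Nat.cast_one]
    rw [this]
    ring_nf
  rw [Finset.prod_congr rfl key, Finset.prod_div_distrib]
  field_simp

lemma exp_tsum' (t : ℝ) : ∑' k : ℕ, t ^ k / (Nat.factorial k : ℝ) = Real.exp t := by
  rw [Real.exp_eq_exp_ℝ, NormedSpace.exp_eq_tsum_div]

lemma tsum_integral_exchange' (s c w : ℝ) (hc : 0 ≤ c) (hw : 0 ≤ w) (hs0 : 0 ≤ s)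
    (hs : 0 ≤ s - c * w) (m : ℕ) :
    ∑' k : ℕ, w ^ k * ∫ x in (0:ℝ)..1,
        x ^ s * (1 - x) ^ m * (-c * Real.log x) ^ k / (Nat.factorial k : ℝ)
      = ∫ x in (0:ℝ)..1, x ^ (s - c * w) * (1 - x) ^ m := by
  have h01 : (0:ℝ) ≤ 1 := by norm_num
  simp only [intervalIntegral.integral_of_le h01]
  set μ : Measure ℝ := volume.restrict (Set.Ioc (0:ℝ) 1) with hμ
  set g : ℕ → ℝ → ℝ := fun k x =>
    w ^ k * (x ^ s * (1 - x) ^ m * (-c * Real.log x) ^ k / (Nat.factorial k : ℝ)) with hg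
  set T : ℝ → ℝ := fun x => x ^ (s - c * w) * (1 - x) ^ m with hT
  have hmeas : ∀ k, Measurable (g k) := fun k =>
    ((((Real.continuous_rpow_const hs0).measurable.mul
        ((measurable_const.sub measurable_id).pow_const m)).mul
      ((measurable_const.mul Real.measurable_log).pow_const k)).div_const _).const_mul _
  have hTmeas : Measurable T :=
    (Real.continuous_rpow_const hs).measurable.mul
      ((measurable_const.sub measurable_id).pow_const m)
  have hnn : ∀ k, ∀ x ∈ Set.Ioc (0:ℝ) 1, 0 ≤ g k x := by
    intro k x hx
    have hlog : Real.log x ≤ 0 := Real.log_nonpos hx.1.le hx.2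
    have h1 : 0 ≤ -c * Real.log x := by nlinarith
    have h2 : 0 ≤ 1 - x := by linarith [hx.2]
    have h3 : 0 ≤ x ^ s := Real.rpow_nonneg hx.1.le s
    positivity
  have hTnn : ∀ x ∈ Set.Ioc (0:ℝ) 1, 0 ≤ T x := by
    intro x hx
    have h2 : 0 ≤ 1 - x := by linarith [hx.2]
    have h3 : 0 ≤ x ^ (s - c * w) := Real.rpow_nonneg hx.1.le _
    positivity
  have hgsum : ∀ x ∈ Set.Ioc (0:ℝ) 1,
      (Summable fun k => g k x) ∧ ∑' k, g k x = T x := by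
    intro x hx
    have hxpos : 0 < x := hx.1
    set t : ℝ := w * (-c * Real.log x) with ht
    have hrw : ∀ k : ℕ, g k x
        = (x ^ s * (1 - x) ^ m) * (t ^ k / (Nat.factorial k : ℝ)) := by
      intro k
      simp only [hg, ht, mul_pow]
      ring
    have hsumm : Summable fun k => g k x := by
      simp only [hrw]
      exact (Real.summable_pow_div_factorial t).mul_left _
    refine ⟨hsumm, ?_⟩
    have : ∑' k, g k x = (x ^ s * (1 - x) ^ m) * ∑' k, t ^ k / (Nat.factorial k : ℝ) := by
      simp only [hrw]; exact tsum_mul_left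
    rw [this, exp_tsum']
    have hexp : Real.exp t = x ^ (-(c * w)) := by
      rw [Real.rpow_def_of_pos hxpos]
      congr 1
      ring
    rw [hexp, hT]
    rw [show x ^ s * (1 - x) ^ m * x ^ (-(c * w))
        = x ^ s * x ^ (-(c * w)) * (1 - x) ^ m by ring,
      ← Real.rpow_add hxpos]
    ring_nf
  have hmem : ∀ᵐ x ∂μ, x ∈ Set.Ioc (0:ℝ) 1 := ae_restrict_mem measurableSet_Ioc
  have hpt : ∀ᵐ x ∂μ, ∑' k, ENNReal.ofReal (g k x) = ENNReal.ofReal (T x) := by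
    filter_upwards [hmem] with x hx
    rw [← ENNReal.ofReal_tsum_of_nonneg (fun k => hnn k x hx) (hgsum x hx).1,
      (hgsum x hx).2]
  have hTfin : ∫⁻ x, ENNReal.ofReal (T x) ∂μ ≠ ⊤ := by
    have hb : ∀ᵐ x ∂μ, ENNReal.ofReal (T x) ≤ 1 := by
      filter_upwards [hmem] with x hx
      rw [ENNReal.ofReal_le_one]
      have h1 : x ^ (s - c * w) ≤ 1 := Real.rpow_le_one hx.1.le hx.2 hs
      have h2 : (1 - x) ^ m ≤ 1 := pow_le_one₀ (by linarith [hx.2]) (by linarith [hx.1])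
      have h3 : 0 ≤ (1 - x) ^ m := pow_nonneg (by linarith [hx.2]) m
      calc T x ≤ 1 * (1 - x) ^ m := by
              rw [hT]; exact mul_le_mul_of_nonneg_right h1 h3
        _ ≤ 1 := by simpa using h2
    have hle : ∫⁻ x, ENNReal.ofReal (T x) ∂μ ≤ ∫⁻ _, 1 ∂μ := lintegral_mono_ae hb
    rw [lintegral_one, hμ, Measure.restrict_apply_univ] at hle
    exact ne_top_of_le_ne_top (by simp [Real.volume_Ioc]) hle
  have hfin : ∀ k, ∫⁻ x, ENNReal.ofReal (g k x) ∂μ ≠ ⊤ := by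
    intro k
    refine ne_top_of_le_ne_top hTfin ?_
    refine le_of_le_of_eq (lintegral_mono_ae ?_) (lintegral_congr_ae hpt)
    filter_upwards [hmem] with x _
    exact ENNReal.le_tsum k
  calc ∑' k : ℕ, w ^ k * ∫ x in Set.Ioc (0:ℝ) 1,
        x ^ s * (1 - x) ^ m * (-c * Real.log x) ^ k / (Nat.factorial k : ℝ)
      = ∑' k, ∫ x, g k x ∂μ :=
        tsum_congr fun k => (MeasureTheory.integral_const_mul _ _).symm
    _ = ∑' k, (∫⁻ x, ENNReal.ofReal (g k x) ∂μ).toReal := by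
        refine tsum_congr fun k => ?_
        refine integral_eq_lintegral_of_nonneg_ae ?_ (hmeas k).aestronglyMeasurable
        filter_upwards [hmem] with x hx using hnn k x hx
    _ = (∑' k, ∫⁻ x, ENNReal.ofReal (g k x) ∂μ).toReal := (ENNReal.tsum_toReal_eq hfin).symm
    _ = (∫⁻ x, ∑' k, ENNReal.ofReal (g k x) ∂μ).toReal := by
        rw [lintegral_tsum fun k => ((hmeas k).ennreal_ofReal).aemeasurable]
    _ = (∫⁻ x, ENNReal.ofReal (T x) ∂μ).toReal := by rw [lintegral_congr_ae hpt]
    _ = ∫ x, T x ∂μ := by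
        refine (integral_eq_lintegral_of_nonneg_ae ?_ hTmeas.aestronglyMeasurable).symm
        filter_upwards [hmem] with x hx using hTnn x hx

/-- The number of mutations arising while the sample of `n` has at least `l` ancestors is a
Poisson mixture with mean `-θ log X`, `X ~ Beta(l-1, n-l+1)`; its pgf is
`∏_{j=l-1}^{n-1} j/(j+θ(1-z))`. -/
theorem stmt_10 (θ : ℝ) (hθ : 0 ≤ θ) (n l : ℕ) (hl : 2 ≤ l) (hln : l ≤ n)
    (z : ℝ) (hz0 : 0 ≤ z) (hz1 : z ≤ 1) :
    ∑' k : ℕ, z ^ k * ((1 / betaFn ((l : ℝ) - 1) ((n : ℝ) - l + 1)) *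
        ∫ x in (0:ℝ)..1, x ^ ((l : ℝ) - 2 + θ) * (1 - x) ^ (n - l) *
          (-θ * Real.log x) ^ k / (Nat.factorial k : ℝ))
      = ∏ j ∈ Finset.Ico (l - 1) n, (j : ℝ) / (j + θ * (1 - z)) := by
  have h2 : (2:ℝ) ≤ (l:ℝ) := by exact_mod_cast hl
  set B0 : ℝ := betaFn ((l : ℝ) - 1) ((n : ℝ) - l + 1) with hB0
  have hstep1 : ∀ k : ℕ, z ^ k * ((1 / B0) *
        ∫ x in (0:ℝ)..1, x ^ ((l : ℝ) - 2 + θ) * (1 - x) ^ (n - l) *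
          (-θ * Real.log x) ^ k / (Nat.factorial k : ℝ))
      = (1 / B0) * (z ^ k *
        ∫ x in (0:ℝ)..1, x ^ ((l : ℝ) - 2 + θ) * (1 - x) ^ (n - l) *
          (-θ * Real.log x) ^ k / (Nat.factorial k : ℝ)) := fun k => by ring
  rw [tsum_congr hstep1, tsum_mul_left]
  have hθz : θ * z ≤ θ := by nlinarith
  have hex := tsum_integral_exchange' ((l : ℝ) - 2 + θ) θ z hθ hz0 (by linarith)
    (by linarith) (n - l)
  rw [hex]
  set u : ℝ := (l : ℝ) - 1 + θ * (1 - z) with hu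
  have hu1 : (l : ℝ) - 2 + θ - θ * z = u - 1 := by rw [hu]; ring
  have hupos : 0 < u := by rw [hu]; nlinarith
  rw [hu1, beta_integral_nat' u hupos (n - l)]
  have hcast : ((n - l : ℕ) : ℝ) + 1 = (n : ℝ) - l + 1 := by
    rw [Nat.cast_sub hln]
  rw [hcast]
  have hc : 0 ≤ θ * (1 - z) := by nlinarith
  have := beta_ratio' l n hl hln (θ * (1 - z)) hc
  rw [hu, ← this, hB0]
  rw [one_div, inv_mul_eq_div]
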